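/- Let n ≥ 1 and let L be a solvable real Lie algebra with dim L = n + 2 and dim [L,L] = n, and suppose that the Lie algebra H := [L,L] is indecomposable. Then L is decomposable if and only if L is isomorphic as a Lie algebra to ℝ × L̄ (with ℝ the 1-dimensional abelian Lie algebra) for some solvable real Lie algebra L̄ with dim L̄ = n + 1 and with derived algebra [L̄,L̄] isomorphic to H. -/

import Mathlib

/-- Componentwise Lie bracket on a binary product. -/
instance prodBracket {L₁ L₂ : Type*} [LieRing L₁] [LieRing L₂] :
    Bracket (L₁ × L₂) (L₁ × L₂) :=
  ⟨fun x y => (⁅x.1, y.1⁆, ⁅x.2, y.2⁆)⟩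

/-- The direct product of two Lie rings. -/
instance prodLieRing {L₁ L₂ : Type*} [LieRing L₁] [LieRing L₂] : LieRing (L₁ × L₂) where
  add_lie x y z := Prod.ext (add_lie x.1 y.1 z.1) (add_lie x.2 y.2 z.2)
  lie_add x y z := Prod.ext (lie_add x.1 y.1 z.1) (lie_add x.2 y.2 z.2)
  lie_self x := Prod.ext (lie_self x.1) (lie_self x.2)
  leibniz_lie x y z := Prod.ext (leibniz_lie x.1 y.1 z.1) (leibniz_lie x.2 y.2 z.2)

/-- The direct product of two Lie algebras. -/
instance prodLieAlgebra {R : Type*} [CommRing R] {L₁ L₂ : Type*} [LieRing L₁] [LieRing L₂]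
    [LieAlgebra R L₁] [LieAlgebra R L₂] : LieAlgebra R (L₁ × L₂) where
  lie_smul t x y := Prod.ext (lie_smul t x.1 y.1) (lie_smul t x.2 y.2)

/-- A real Lie algebra is decomposable if it is isomorphic to the direct product of two
nonzero Lie algebras, and indecomposable otherwise. -/
def Decomposable (L : Type) [LieRing L] [LieAlgebra ℝ L] : Prop :=
  ∃ (L₁ L₂ : Type) (_ : LieRing L₁) (_ : LieAlgebra ℝ L₁) (_ : LieRing L₂) (_ : LieAlgebra ℝ L₂),
    Nontrivial L₁ ∧ Nontrivial L₂ ∧ Nonempty (L ≃ₗ⁅ℝ⁆ (L₁ × L₂))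

attribute [local instance 100] LieRing.ofAssociativeRing

section Aux

variable {R : Type*} [CommRing R] {L₁ L₂ M₁ M₂ : Type*}
  [LieRing L₁] [LieRing L₂] [LieRing M₁] [LieRing M₂]
  [LieAlgebra R L₁] [LieAlgebra R L₂] [LieAlgebra R M₁] [LieAlgebra R M₂]

/-- first projection as a Lie hom -/
def lieFst : (L₁ × L₂) →ₗ⁅R⁆ L₁ := { LinearMap.fst R L₁ L₂ with map_lie' := rfl }

def lieSnd : (L₁ × L₂) →ₗ⁅R⁆ L₂ := { LinearMap.snd R L₁ L₂ with map_lie' := rfl }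

def lieInl : L₁ →ₗ⁅R⁆ (L₁ × L₂) :=
  { LinearMap.inl R L₁ L₂ with map_lie' := fun {x y} => Prod.ext rfl (zero_lie 0).symm }

def lieInr : L₂ →ₗ⁅R⁆ (L₁ × L₂) :=
  { LinearMap.inr R L₁ L₂ with map_lie' := fun {x y} => Prod.ext (zero_lie 0).symm rfl }

def lieProdComm : (L₁ × L₂) ≃ₗ⁅R⁆ (L₂ × L₁) :=
  { LinearEquiv.prodComm R L₁ L₂ with map_lie' := rfl }

def lieProdCongr (e₁ : L₁ ≃ₗ⁅R⁆ M₁) (e₂ : L₂ ≃ₗ⁅R⁆ M₂) : (L₁ × L₂) ≃ₗ⁅R⁆ (M₁ × M₂) :=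
  { e₁.toLinearEquiv.prodCongr e₂.toLinearEquiv with
    map_lie' := fun {x y} => Prod.ext (e₁.toLieHom.map_lie x.1 y.1) (e₂.toLieHom.map_lie x.2 y.2) }

/-- equiv of ideals under a Lie equiv -/
def idealEquiv {L L' : Type*} [LieRing L] [LieAlgebra R L] [LieRing L'] [LieAlgebra R L']
    (e : L ≃ₗ⁅R⁆ L') (I : LieIdeal R L) (J : LieIdeal R L')
    (h : ∀ x, x ∈ I ↔ e x ∈ J) : ↥I ≃ₗ⁅R⁆ ↥J where
  toFun x := ⟨e x.1, (h x.1).1 x.2⟩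
  invFun y := ⟨e.symm y.1, (h _).2 (by simpa using y.2)⟩
  left_inv x := by ext; simp
  right_inv y := by ext; simp
  map_add' x y := by ext; exact map_add e.toLinearEquiv _ _
  map_smul' t x := by ext; exact map_smul e.toLinearEquiv _ _
  map_lie' {x y} := by ext; exact e.toLieHom.map_lie _ _

end Aux

section Prod
variable {R : Type*} [CommRing R] {L₁ L₂ : Type*}
  [LieRing L₁] [LieRing L₂] [LieAlgebra R L₁] [LieAlgebra R L₂]

def prodIdeal (I : LieIdeal R L₁) (J : LieIdeal R L₂) : LieIdeal R (L₁ × L₂) :=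
  { (I : Submodule R L₁).prod (J : Submodule R L₂) with
    lie_mem := fun {x m} hm => ⟨I.lie_mem hm.1, J.lie_mem hm.2⟩ }

lemma mem_prodIdeal {I : LieIdeal R L₁} {J : LieIdeal R L₂} {x : L₁ × L₂} :
    x ∈ prodIdeal I J ↔ x.1 ∈ I ∧ x.2 ∈ J := Iff.rfl

lemma lieDerivedOne (L : Type*) [LieRing L] [LieAlgebra R L] :
    LieAlgebra.derivedSeries R L 1 = ⁅(⊤ : LieIdeal R L), ⊤⁆ := rfl

lemma lieInl_apply (a : L₁) : (lieInl (R := R) (L₂ := L₂) a) = (a, (0 : L₂)) := rfl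
lemma lieInr_apply (b : L₂) : (lieInr (R := R) (L₁ := L₁) b) = ((0 : L₁), b) := rfl

lemma derived_prod :
    LieAlgebra.derivedSeries R (L₁ × L₂) 1 =
      prodIdeal (LieAlgebra.derivedSeries R L₁ 1) (LieAlgebra.derivedSeries R L₂ 1) := by
  apply le_antisymm
  · rw [lieDerivedOne, LieSubmodule.lie_le_iff]
    intro x _ m _
    exact ⟨by rw [lieDerivedOne]; exact LieSubmodule.lie_mem_lie trivial trivial,
           by rw [lieDerivedOne]; exact LieSubmodule.lie_mem_lie trivial trivial⟩
  · rintro ⟨a, b⟩ ⟨ha, hb⟩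
    have h : ((a, b) : L₁ × L₂) = (a, 0) + (0, b) := by simp
    rw [h]
    exact add_mem
      (LieIdeal.derivedSeries_map_le (f := (lieInl : L₁ →ₗ⁅R⁆ L₁ × L₂)) 1 (LieIdeal.mem_map ha))
      (LieIdeal.derivedSeries_map_le (f := (lieInr : L₂ →ₗ⁅R⁆ L₁ × L₂)) 1 (LieIdeal.mem_map hb))

def prodIdealEquiv (I : LieIdeal R L₁) (J : LieIdeal R L₂) :
    ↥(prodIdeal I J) ≃ₗ⁅R⁆ (↥I × ↥J) where
  toFun x := (⟨x.1.1, x.2.1⟩, ⟨x.1.2, x.2.2⟩)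
  invFun p := ⟨(p.1.1, p.2.1), p.1.2, p.2.2⟩
  left_inv x := rfl
  right_inv p := rfl
  map_add' x y := rfl
  map_smul' t x := rfl
  map_lie' {x y} := rfl

section Main
open LieAlgebra Module

def lieProdSubsingletonEquiv {R M N : Type*} [CommRing R] [LieRing M] [LieRing N]
    [LieAlgebra R M] [LieAlgebra R N] [Subsingleton N] : (M × N) ≃ₗ⁅R⁆ M where
  toFun x := x.1
  invFun m := (m, 0)
  left_inv x := Prod.ext rfl (Subsingleton.elim _ _)
  right_inv m := rfl
  map_add' x y := rfl
  map_smul' t x := rfl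
  map_lie' {x y} := rfl

lemma lieEquivReal (L₂ : Type) [LieRing L₂] [LieAlgebra ℝ L₂] [FiniteDimensional ℝ L₂]
    (h2 : derivedSeries ℝ L₂ 1 = ⊥) (hd : finrank ℝ L₂ = 1) :
    Nonempty (L₂ ≃ₗ⁅ℝ⁆ ℝ) := by
  have habel : ∀ x y : L₂, ⁅x, y⁆ = 0 := by
    intro x y
    have hmem : ⁅x, y⁆ ∈ derivedSeries ℝ L₂ 1 := by
      rw [lieDerivedOne]; exact LieSubmodule.lie_mem_lie trivial trivial
    rw [h2] at hmem
    exact hmem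
  obtain ⟨φ⟩ := FiniteDimensional.nonempty_linearEquiv_of_finrank_eq
    (R := ℝ) (M := L₂) (M' := ℝ) (by simp [hd])
  refine ⟨{ φ with map_lie' := fun {x y} => ?_ }⟩
  show φ ⁅x, y⁆ = ⁅φ x, φ y⁆
  rw [habel, map_zero, Ring.lie_def, mul_comm, sub_self]

lemma memIffProd {L L₁ L₂ : Type} [LieRing L] [LieAlgebra ℝ L]
    [LieRing L₁] [LieAlgebra ℝ L₁] [LieRing L₂] [LieAlgebra ℝ L₂]
    (e : L ≃ₗ⁅ℝ⁆ L₁ × L₂) (H : LieIdeal ℝ L) (hH : H = derivedSeries ℝ L 1) :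
    ∀ x, x ∈ H ↔ e x ∈ prodIdeal (derivedSeries ℝ L₁ 1) (derivedSeries ℝ L₂ 1) := by
  have hmap : LieIdeal.map e.toLieHom H = derivedSeries ℝ (L₁ × L₂) 1 := by
    rw [hH]; exact LieIdeal.derivedSeries_map_eq 1 e.surjective
  have hmap' : LieIdeal.map e.symm.toLieHom (derivedSeries ℝ (L₁ × L₂) 1)
      = derivedSeries ℝ L 1 :=
    LieIdeal.derivedSeries_map_eq 1 e.symm.surjective
  intro x
  constructor
  · intro hx
    rw [← derived_prod, ← hmap]
    exact LieIdeal.mem_map hx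
  · intro hx
    rw [← derived_prod] at hx
    have := LieIdeal.mem_map (f := e.symm.toLieHom) hx
    rw [hmap'] at this
    rw [hH]
    have hx' : e.symm.toLieHom (e x) = x := e.symm_apply_apply x
    rwa [hx'] at this

/-- the equivalence `H ≃ D₁ × D₂`. -/
noncomputable def HEquiv {L L₁ L₂ : Type} [LieRing L] [LieAlgebra ℝ L]
    [LieRing L₁] [LieAlgebra ℝ L₁] [LieRing L₂] [LieAlgebra ℝ L₂]
    (e : L ≃ₗ⁅ℝ⁆ L₁ × L₂) (H : LieIdeal ℝ L) (hH : H = derivedSeries ℝ L 1) :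
    ↥H ≃ₗ⁅ℝ⁆ (↥(derivedSeries ℝ L₁ 1) × ↥(derivedSeries ℝ L₂ 1)) :=
  (idealEquiv e H _ (memIffProd e H hH)).trans (prodIdealEquiv _ _)

end Main

section Key
open LieAlgebra Module

lemma key (n : ℕ) (L : Type) [LieRing L] [LieAlgebra ℝ L]
    [FiniteDimensional ℝ L] [LieAlgebra.IsSolvable L]
    (hdim : finrank ℝ L = n + 2)
    (H : LieIdeal ℝ L) (hH : H = derivedSeries ℝ L 1)
    (hHdim : finrank ℝ ↥H = n)
    (L₁ L₂ : Type) [LieRing L₁] [LieAlgebra ℝ L₁] [LieRing L₂] [LieAlgebra ℝ L₂]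
    (h1 : Nontrivial L₁) (h2 : Nontrivial L₂)
    (e : L ≃ₗ⁅ℝ⁆ L₁ × L₂)
    (hD2 : derivedSeries ℝ L₂ 1 = ⊥) :
    ∃ (L' : Type) (_ : LieRing L') (_ : LieAlgebra ℝ L'),
        LieAlgebra.IsSolvable L' ∧ finrank ℝ L' = n + 1 ∧
        Nonempty (↥(derivedSeries ℝ L' 1) ≃ₗ⁅ℝ⁆ ↥H) ∧
        Nonempty (L ≃ₗ⁅ℝ⁆ (ℝ × L')) := by
  have hfdProd : FiniteDimensional ℝ (L₁ × L₂) := Module.Finite.equiv e.toLinearEquiv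
  have hfd1 : FiniteDimensional ℝ L₁ :=
    Module.Finite.of_surjective (LinearMap.fst ℝ L₁ L₂) Prod.fst_surjective
  have hfd2 : FiniteDimensional ℝ L₂ :=
    Module.Finite.of_surjective (LinearMap.snd ℝ L₁ L₂) Prod.snd_surjective
  have hs1 : LieAlgebra.IsSolvable L₁ := by
    have hsurj : Function.Surjective ((lieFst : (L₁ × L₂) →ₗ⁅ℝ⁆ L₁).comp e.toLieHom) :=
      Prod.fst_surjective.comp e.surjective
    exact hsurj.lieAlgebra_isSolvable
  -- the equivalence H ≃ D₁
  set D₁ := derivedSeries ℝ L₁ 1 with hD₁def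
  have hsub : Subsingleton ↥(derivedSeries ℝ L₂ 1) :=
    ⟨fun a b => Subtype.ext (by
      have hz := (LieSubmodule.eq_bot_iff _).mp hD2
      rw [hz _ a.2, hz _ b.2])⟩
  have EH : ↥H ≃ₗ⁅ℝ⁆ ↥D₁ := (HEquiv e H hH).trans lieProdSubsingletonEquiv
  -- dimensions
  have hD1rank : finrank ℝ ↥D₁ = n := by rw [← hHdim]; exact EH.toLinearEquiv.symm.finrank_eq
  have hsum : finrank ℝ L₁ + finrank ℝ L₂ = n + 2 := by
    rw [← Module.finrank_prod, ← e.toLinearEquiv.finrank_eq, hdim]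
  have hlt : finrank ℝ ↥D₁ < finrank ℝ L₁ := by
    have htop : D₁ < ⊤ := LieAlgebra.derivedSeries_lt_top_of_solvable (R := ℝ) (L := L₁)
    have hne : (LieSubmodule.toSubmodule D₁) ≠ ⊤ := by
      intro hc
      exact ne_of_lt htop (LieSubmodule.toSubmodule_injective
        (by rw [hc, LieSubmodule.top_toSubmodule]))
    exact Submodule.finrank_lt hne
  have h2pos : 0 < finrank ℝ L₂ := Module.finrank_pos
  have hL1 : finrank ℝ L₁ = n + 1 := by omega
  have hL2 : finrank ℝ L₂ = 1 := by omega
  obtain ⟨ψ⟩ := lieEquivReal L₂ hD2 hL2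
  exact ⟨L₁, inferInstance, inferInstance, hs1, hL1, ⟨EH.symm⟩,
    ⟨(e.trans (lieProdCongr (LieEquiv.refl) ψ)).trans lieProdComm⟩⟩

end Key

/-- Let `L` be solvable with `dim L = n + 2` (`n ≥ 1`), `dim [L,L] = n`, and suppose the
Lie algebra `H := [L,L]` is indecomposable. Then `L` is decomposable iff `L ≅ ℝ × L'`
for some solvable Lie algebra `L'` with `dim L' = n + 1` and `[L',L'] ≅ H`. -/
theorem stmt11 (n : ℕ) (hn : 1 ≤ n) (L : Type) [LieRing L] [LieAlgebra ℝ L]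
    [FiniteDimensional ℝ L] [LieAlgebra.IsSolvable L]
    (hdim : Module.finrank ℝ L = n + 2)
    (H : LieIdeal ℝ L) (hH : H = LieAlgebra.derivedSeries ℝ L 1)
    (hHdim : Module.finrank ℝ ↥H = n)
    (hind : ¬ Decomposable ↥H) :
    Decomposable L ↔
      ∃ (L' : Type) (_ : LieRing L') (_ : LieAlgebra ℝ L'),
        LieAlgebra.IsSolvable L' ∧ Module.finrank ℝ L' = n + 1 ∧
        Nonempty (↥(LieAlgebra.derivedSeries ℝ L' 1) ≃ₗ⁅ℝ⁆ ↥H) ∧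
        Nonempty (L ≃ₗ⁅ℝ⁆ (ℝ × L')) := by
  constructor
  · rintro ⟨L₁, L₂, _, _, _, _, h1, h2, ⟨e⟩⟩
    by_cases hd2 : LieAlgebra.derivedSeries ℝ L₂ 1 = ⊥
    · exact key n L hdim H hH hHdim L₁ L₂ h1 h2 e hd2
    by_cases hd1 : LieAlgebra.derivedSeries ℝ L₁ 1 = ⊥
    · exact key n L hdim H hH hHdim L₂ L₁ h2 h1 (e.trans lieProdComm) hd1
    · exfalso
      apply hind
      have nt1 : Nontrivial ↥(LieAlgebra.derivedSeries ℝ L₁ 1) :=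
        (LieSubmodule.nontrivial_iff_ne_bot _ _ _).mpr hd1
      have nt2 : Nontrivial ↥(LieAlgebra.derivedSeries ℝ L₂ 1) :=
        (LieSubmodule.nontrivial_iff_ne_bot _ _ _).mpr hd2
      exact ⟨↥(LieAlgebra.derivedSeries ℝ L₁ 1), ↥(LieAlgebra.derivedSeries ℝ L₂ 1),
        inferInstance, inferInstance, inferInstance, inferInstance, nt1, nt2, ⟨HEquiv e H hH⟩⟩
  · rintro ⟨L', _, _, hsolv, hdim', -, ⟨e⟩⟩
    have : Nontrivial L' := Module.nontrivial_of_finrank_pos (R := ℝ) (by rw [hdim']; omega)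
    exact ⟨ℝ, L', inferInstance, inferInstance, inferInstance, inferInstance,
      inferInstance, this, ⟨e⟩⟩
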